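/- Let ρ_1, ρ_2, ... be i.i.d. positive random variables with finite moments of every order and mean E[ρ_1] > 0, and let L be a positive-integer-valued random variable independent of (ρ_i) with P(L ≥ n) = g(n) = n^{-1}(log(n+e-1))^{-1}(log log(n+e^e-1))^{-1}. Then P(Σ_{i=1}^L ρ_i + 1 > t) ~ E[ρ_1] · t^{-1} (log t)^{-1} (log log t)^{-1} as t → ∞; that is, lim_{t→∞} t · log(t) · log log(t) · P(Σ_{i=1}^L ρ_i + 1 > t) = E[ρ_1]. -/

import Mathlib

open MeasureTheory ProbabilityTheory Real Filter
open scoped NNReal ENNReal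

noncomputable section

def rstaG (n : ℕ) : ℝ :=
  ((n : ℝ))⁻¹ * (Real.log ((n : ℝ) + Real.exp 1 - 1))⁻¹ *
    (Real.log (Real.log ((n : ℝ) + Real.exp (Real.exp 1) - 1)))⁻¹

lemma rstaG_pos {n : ℕ} (hn : 1 ≤ n) : 0 < rstaG n := by
  have h1 : (1:ℝ) ≤ (n:ℝ) := by exact_mod_cast hn
  have hA : Real.exp 1 ≤ (n : ℝ) + Real.exp 1 - 1 := by linarith
  have hB : Real.exp (Real.exp 1) ≤ (n : ℝ) + Real.exp (Real.exp 1) - 1 := by linarith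
  have hlA : 0 < Real.log ((n : ℝ) + Real.exp 1 - 1) := by
    have := Real.log_le_log (Real.exp_pos 1) hA
    rw [Real.log_exp] at this; linarith
  have hlB : Real.exp 1 ≤ Real.log ((n : ℝ) + Real.exp (Real.exp 1) - 1) := by
    have := Real.log_le_log (Real.exp_pos _) hB
    rwa [Real.log_exp] at this
  have hllB : 0 < Real.log (Real.log ((n : ℝ) + Real.exp (Real.exp 1) - 1)) :=
    Real.log_pos (lt_of_lt_of_le (by linarith [Real.add_one_le_exp (1:ℝ)]) hlB)
  have : (0:ℝ) < n := by linarith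
  exact mul_pos (mul_pos (by positivity) (by positivity)) (by positivity)

lemma rsta_logaux (v w : ℝ → ℝ) (c : ℝ) (hc : 0 < c)
    (hvw : Tendsto (fun t => v t / w t) atTop (nhds c))
    (hw : Tendsto w atTop atTop) :
    Tendsto (fun t => Real.log (v t) / Real.log (w t)) atTop (nhds 1) := by
  have hwpos : ∀ᶠ t in atTop, 1 < w t := hw.eventually_gt_atTop 1
  have hratio : ∀ᶠ t in atTop, c / 2 < v t / w t :=
    hvw.eventually (eventually_gt_nhds (by linarith))
  have hlogdiv : Tendsto (fun t => Real.log (v t / w t)) atTop (nhds (Real.log c)) :=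
    (Real.continuousAt_log hc.ne').tendsto.comp hvw
  have hlogw : Tendsto (fun t => Real.log (w t)) atTop atTop :=
    Real.tendsto_log_atTop.comp hw
  have h0 : Tendsto (fun t => Real.log (v t / w t) / Real.log (w t)) atTop (nhds 0) :=
    hlogdiv.div_atTop hlogw
  have final : Tendsto (fun t => Real.log (v t / w t) / Real.log (w t) + 1) atTop (nhds 1) := by
    simpa using h0.add tendsto_const_nhds
  apply final.congr'
  filter_upwards [hwpos, hratio] with t hw1 hr
  have hwne : w t ≠ 0 := by linarith
  have hvpos : 0 < v t := by
    have : 0 < v t / w t := lt_trans (by positivity) hr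
    have := mul_pos this (lt_trans one_pos hw1)
    rwa [div_mul_cancel₀ _ hwne] at this
  have hlw : 0 < Real.log (w t) := Real.log_pos hw1
  have : Real.log (v t) = Real.log (v t / w t) + Real.log (w t) := by
    rw [← Real.log_mul (by positivity) hwne, div_mul_cancel₀ _ hwne]
  rw [this, add_div, div_self hlw.ne']

lemma rsta_nat_approx (a : ℝ) (u : ℝ → ℕ)
    (h : ∀ᶠ t in atTop, a * t ≤ (u t : ℝ) ∧ (u t : ℝ) ≤ a * t + 1) :
    Tendsto (fun t => (u t : ℝ) / t) atTop (nhds a) := by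
  have h1 : Tendsto (fun t : ℝ => a + 1 / t) atTop (nhds a) := by
    simpa using (tendsto_const_nhds : Tendsto (fun _ : ℝ => a) atTop (nhds a)).add tendsto_inv_atTop_zero
  apply tendsto_of_tendsto_of_tendsto_of_le_of_le' tendsto_const_nhds h1
  · filter_upwards [h, eventually_gt_atTop 0] with t ht htpos
    rw [le_div_iff₀ htpos]; linarith [ht.1]
  · filter_upwards [h, eventually_gt_atTop 0] with t ht htpos
    rw [div_le_iff₀ htpos]
    have : a * t + 1 = (a + 1/t) * t := by field_simp
    linarith [ht.2, this ▸ ht.2]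

lemma rsta_lemA (c : ℝ) (hc : 0 < c) (n : ℝ → ℕ)
    (hn : Tendsto (fun t => (n t : ℝ) / t) atTop (nhds c)) :
    Tendsto (fun t => t * Real.log t * Real.log (Real.log t) * rstaG (n t))
      atTop (nhds c⁻¹) := by
  set N : ℝ → ℝ := fun t => (n t : ℝ) with hN
  set A : ℝ → ℝ := fun t => N t + Real.exp 1 - 1 with hA
  set B : ℝ → ℝ := fun t => N t + Real.exp (Real.exp 1) - 1 with hB
  have hAt : Tendsto (fun t => A t / t) atTop (nhds c) := by
    have h2 : Tendsto (fun t : ℝ => (Real.exp 1 - 1) / t) atTop (nhds 0) :=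
      tendsto_const_nhds.div_atTop tendsto_id
    have := hn.add h2
    rw [add_zero] at this
    refine this.congr (fun t => ?_)
    simp only [hA, hN]; ring
  have hBt : Tendsto (fun t => B t / t) atTop (nhds c) := by
    have h2 : Tendsto (fun t : ℝ => (Real.exp (Real.exp 1) - 1) / t) atTop (nhds 0) :=
      tendsto_const_nhds.div_atTop tendsto_id
    have := hn.add h2
    rw [add_zero] at this
    refine this.congr (fun t => ?_)
    simp only [hB, hN]; ring
  have hlA : Tendsto (fun t => Real.log (A t) / Real.log t) atTop (nhds 1) :=
    rsta_logaux A id c hc hAt tendsto_id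
  have hlB : Tendsto (fun t => Real.log (B t) / Real.log t) atTop (nhds 1) :=
    rsta_logaux B id c hc hBt tendsto_id
  have hllB : Tendsto (fun t => Real.log (Real.log (B t)) / Real.log (Real.log t))
      atTop (nhds 1) :=
    rsta_logaux (fun t => Real.log (B t)) Real.log 1 one_pos hlB Real.tendsto_log_atTop
  have hprod : Tendsto (fun t => (N t / t) * (Real.log (A t) / Real.log t) *
      (Real.log (Real.log (B t)) / Real.log (Real.log t))) atTop (nhds (c * 1 * 1)) :=
    (hn.mul hlA).mul hllB
  have hinv : Tendsto (fun t => ((N t / t) * (Real.log (A t) / Real.log t) *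
      (Real.log (Real.log (B t)) / Real.log (Real.log t)))⁻¹) atTop (nhds ((c * 1 * 1)⁻¹)) :=
    hprod.inv₀ (by simp [hc.ne'])
  rw [mul_one, mul_one] at hinv
  refine hinv.congr (fun t => ?_)
  rw [mul_inv, mul_inv, inv_div, inv_div, inv_div]
  simp only [rstaG, hA, hB, hN]
  ring

lemma rsta_llt_div : Tendsto (fun t => Real.log t * Real.log (Real.log t) / t) atTop (nhds 0) := by
  have hup : Tendsto (fun t => Real.log t ^ 2 / t) atTop (nhds 0) := by
    have := Real.tendsto_pow_log_div_mul_add_atTop 1 0 2 one_ne_zero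
    simpa using this
  apply tendsto_of_tendsto_of_tendsto_of_le_of_le' tendsto_const_nhds hup
  · filter_upwards [eventually_ge_atTop (Real.exp (Real.exp 1))] with t ht
    have htpos : 0 < t := lt_of_lt_of_le (Real.exp_pos _) ht
    have hlt : Real.exp 1 ≤ Real.log t := (Real.le_log_iff_exp_le htpos).2 ht
    have hltpos : 0 < Real.log t := lt_of_lt_of_le (Real.exp_pos 1) hlt
    have hllt : 0 ≤ Real.log (Real.log t) :=
      Real.log_nonneg (le_trans (by linarith [Real.add_one_le_exp (1:ℝ)]) hlt)
    positivity
  · filter_upwards [eventually_ge_atTop (Real.exp (Real.exp 1))] with t ht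
    have htpos : 0 < t := lt_of_lt_of_le (Real.exp_pos _) ht
    have hlt : Real.exp 1 ≤ Real.log t := (Real.le_log_iff_exp_le htpos).2 ht
    have hltpos : 0 < Real.log t := lt_of_lt_of_le (Real.exp_pos 1) hlt
    have hle : Real.log (Real.log t) ≤ Real.log t :=
      le_trans (by linarith [Real.log_le_sub_one_of_pos hltpos]) le_rfl
    have h1 : Real.log t * Real.log (Real.log t) ≤ Real.log t ^ 2 := by nlinarith
    exact (div_le_div_iff_of_pos_right htpos).2 h1

lemma rsta_llt_div_sq :
    Tendsto (fun t => Real.log t * Real.log (Real.log t) / t ^ 2) atTop (nhds 0) := by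
  apply tendsto_of_tendsto_of_tendsto_of_le_of_le' tendsto_const_nhds rsta_llt_div
  · filter_upwards [eventually_ge_atTop (Real.exp (Real.exp 1))] with t ht
    have htpos : 0 < t := lt_of_lt_of_le (Real.exp_pos _) ht
    have hlt : Real.exp 1 ≤ Real.log t := (Real.le_log_iff_exp_le htpos).2 ht
    have hltpos : 0 < Real.log t := lt_of_lt_of_le (Real.exp_pos 1) hlt
    have hllt : 0 ≤ Real.log (Real.log t) :=
      Real.log_nonneg (le_trans (by linarith [Real.add_one_le_exp (1:ℝ)]) hlt)
    positivity
  · filter_upwards [eventually_ge_atTop (Real.exp (Real.exp 1)), eventually_ge_atTop 1]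
      with t ht ht1
    have htpos : 0 < t := lt_of_lt_of_le (Real.exp_pos _) ht
    have hlt : Real.exp 1 ≤ Real.log t := (Real.le_log_iff_exp_le htpos).2 ht
    have hltpos : 0 < Real.log t := lt_of_lt_of_le (Real.exp_pos 1) hlt
    have hllt : 0 ≤ Real.log (Real.log t) :=
      Real.log_nonneg (le_trans (by linarith [Real.add_one_le_exp (1:ℝ)]) hlt)
    have hnum : 0 ≤ Real.log t * Real.log (Real.log t) := by positivity
    have ht2 : t ≤ t ^ 2 := by nlinarith
    have hinv : 1 / t ^ 2 ≤ 1 / t := by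
      apply one_div_le_one_div_of_le htpos ht2
    calc Real.log t * Real.log (Real.log t) / t ^ 2
        = Real.log t * Real.log (Real.log t) * (1 / t ^ 2) := by ring
      _ ≤ Real.log t * Real.log (Real.log t) * (1 / t) := by
          exact mul_le_mul_of_nonneg_left hinv hnum
      _ = Real.log t * Real.log (Real.log t) / t := by ring

lemma rsta_alg (c εh t lt llt M S : ℝ) (ht : t ≠ 0) (hε : εh ≠ 0) :
    t * lt * llt * (((c*t)*M + 3*(c*t)^2*S)/(εh*t)^4) =
      (c*M/(εh^4)) * (lt*llt/t^2) + (3*c^2*S/(εh^4)) * (lt*llt/t) := by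
  field_simp

lemma rsta_indepFun_sum {Ω : Type*} [MeasurableSpace Ω] {P : Measure Ω}
    (Y : ℕ → Ω → ℝ) (hmeas : ∀ i, Measurable (Y i))
    (hindep : iIndepFun Y P) (n : ℕ) :
    IndepFun (fun ω => ∑ i ∈ Finset.Icc 1 n, Y i ω) (Y (n+1)) P := by
  have hd : Disjoint (Finset.Icc 1 n) ({n+1} : Finset ℕ) := by
    simp only [Finset.disjoint_singleton_right, Finset.mem_Icc]; omega
  have h := hindep.indepFun_finset (Finset.Icc 1 n) {n+1} hd hmeas
  have hsum : Measurable fun x : (Finset.Icc 1 n : Finset ℕ) → ℝ => ∑ i, x i :=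
    Finset.measurable_sum _ (fun i _ => measurable_pi_apply i)
  have hev : Measurable fun x : ({n+1} : Finset ℕ) → ℝ =>
      x ⟨n+1, Finset.mem_singleton_self _⟩ := measurable_pi_apply _
  have h2 := h.comp hsum hev
  have heq1 : ((fun x : (Finset.Icc 1 n : Finset ℕ) → ℝ => ∑ i, x i) ∘
      (fun ω (i : (Finset.Icc 1 n : Finset ℕ)) => Y i ω)) =
      fun ω => ∑ i ∈ Finset.Icc 1 n, Y i ω := by
    funext ω
    show (∑ i : (Finset.Icc 1 n : Finset ℕ), Y i ω) = _
    exact Finset.sum_coe_sort (Finset.Icc 1 n) (fun j => Y j ω)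
  rwa [heq1] at h2

lemma rsta_moment {Ω : Type*} [MeasurableSpace Ω] (P : Measure Ω) [IsProbabilityMeasure P]
    (Y : ℕ → Ω → ℝ) (hmeas : ∀ i, Measurable (Y i))
    (hindep : iIndepFun Y P)
    (hint : ∀ i k, Integrable (fun ω => Y i ω ^ k) P)
    (hzero : ∀ i, ∫ ω, Y i ω ∂P = 0)
    (σ2 m4 : ℝ)
    (h2 : ∀ i, ∫ ω, Y i ω ^ 2 ∂P = σ2)
    (h4 : ∀ i, ∫ ω, Y i ω ^ 4 ∂P = m4) (n : ℕ) :
    (∀ k, k ≤ 4 → Integrable (fun ω => (∑ i ∈ Finset.Icc 1 n, Y i ω) ^ k) P) ∧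
      ∫ ω, (∑ i ∈ Finset.Icc 1 n, Y i ω) ∂P = 0 ∧
      ∫ ω, (∑ i ∈ Finset.Icc 1 n, Y i ω) ^ 2 ∂P = n * σ2 ∧
      ∫ ω, (∑ i ∈ Finset.Icc 1 n, Y i ω) ^ 4 ∂P = n * m4 + 3 * n * ((n:ℝ) - 1) * σ2 ^ 2 := by
  induction n with
  | zero =>
    have he : Finset.Icc 1 0 = (∅ : Finset ℕ) := by simp
    refine ⟨fun k hk => ?_, ?_, ?_, ?_⟩
    · simpa [he] using integrable_const ((0:ℝ) ^ k)
    · simp [he]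
    · simp [he]
    · simp [he]
  | succ n IH =>
    obtain ⟨IHint, IH1, IH2, IH4⟩ := IH
    set T : Ω → ℝ := fun ω => ∑ i ∈ Finset.Icc 1 n, Y i ω with hT
    set V : Ω → ℝ := Y (n+1) with hV
    have hTmeas : Measurable T := Finset.measurable_sum _ fun i _ => hmeas i
    have hTV : IndepFun T V P := rsta_indepFun_sum Y hmeas hindep n
    have hpow : ∀ a b : ℕ, IndepFun (fun ω => V ω ^ a) (fun ω => T ω ^ b) P := fun a b =>
      hTV.symm.comp (measurable_id.pow_const a) (measurable_id.pow_const b)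
    have hImul : ∀ a b : ℕ, b ≤ 4 → Integrable (fun ω => V ω ^ a * T ω ^ b) P := fun a b hb =>
      (hpow a b).integrable_mul (hint (n+1) a) (IHint b hb)
    have hEmul : ∀ a b : ℕ, b ≤ 4 →
        ∫ ω, V ω ^ a * T ω ^ b ∂P = (∫ ω, V ω ^ a ∂P) * (∫ ω, T ω ^ b ∂P) := fun a b hb =>
      (hpow a b).integral_mul_eq_mul_integral (hint (n+1) a).aestronglyMeasurable (IHint b hb).aestronglyMeasurable
    have hsum : ∀ ω, ∑ i ∈ Finset.Icc 1 (n+1), Y i ω = T ω + V ω := fun ω =>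
      Finset.sum_Icc_succ_top (by omega) _
    have EV0 : ∫ ω, V ω ^ 0 ∂P = 1 := by simp
    have EV1 : ∫ ω, V ω ^ 1 ∂P = 0 := by simpa using hzero (n+1)
    have EV2 : ∫ ω, V ω ^ 2 ∂P = σ2 := h2 (n+1)
    have EV4 : ∫ ω, V ω ^ 4 ∂P = m4 := h4 (n+1)
    have ET0 : ∫ ω, T ω ^ 0 ∂P = 1 := by simp
    have ET1 : ∫ ω, T ω ^ 1 ∂P = 0 := by simpa using IH1
    have S3 : ∀ f1 f2 f3 : Ω → ℝ, Integrable f1 P → Integrable f2 P → Integrable f3 P →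
        ∫ ω, (f1 ω + (f2 ω + f3 ω)) ∂P =
          (∫ ω, f1 ω ∂P) + ((∫ ω, f2 ω ∂P) + ∫ ω, f3 ω ∂P) := by
      intro f1 f2 f3 j1 j2 j3
      have j23 : Integrable (fun ω => f2 ω + f3 ω) P := j2.add j3
      rw [integral_add j1 j23, integral_add j2 j3]
    have S5 : ∀ f1 f2 f3 f4 f5 : Ω → ℝ, Integrable f1 P → Integrable f2 P → Integrable f3 P →
        Integrable f4 P → Integrable f5 P →
        ∫ ω, (f1 ω + (f2 ω + (f3 ω + (f4 ω + f5 ω)))) ∂P =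
          (∫ ω, f1 ω ∂P) + ((∫ ω, f2 ω ∂P) + ((∫ ω, f3 ω ∂P) +
            ((∫ ω, f4 ω ∂P) + ∫ ω, f5 ω ∂P))) := by
      intro f1 f2 f3 f4 f5 j1 j2 j3 j4 j5
      have j45 : Integrable (fun ω => f4 ω + f5 ω) P := j4.add j5
      have j345 : Integrable (fun ω => f3 ω + (f4 ω + f5 ω)) P := j3.add j45
      have j2345 : Integrable (fun ω => f2 ω + (f3 ω + (f4 ω + f5 ω))) P := j2.add j345
      rw [integral_add j1 j2345, integral_add j2 j345, integral_add j3 j45,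
        integral_add j4 j5]
    refine ⟨fun k hk => ?_, ?_, ?_, ?_⟩
    · -- integrability
      have hfun : (fun ω => (∑ i ∈ Finset.Icc 1 (n+1), Y i ω) ^ k) =
          fun ω => ∑ j ∈ Finset.range (k+1), V ω ^ j * T ω ^ (k - j) * (k.choose j : ℝ) := by
        funext ω; rw [hsum ω, add_comm (T ω), add_pow]
      rw [hfun]
      exact integrable_finset_sum _ fun j hj => (hImul j (k - j) (by omega)).mul_const _
    · -- mean
      have hfun : (fun ω => ∑ i ∈ Finset.Icc 1 (n+1), Y i ω) = fun ω => T ω + V ω := funext hsum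
      rw [hfun, integral_add (by simpa using IHint 1 (by omega)) (by simpa using hint (n+1) 1),
        IH1]
      simpa using hzero (n+1)
    · -- second moment
      have hfun : (fun ω => (∑ i ∈ Finset.Icc 1 (n+1), Y i ω) ^ 2) =
          fun ω => V ω ^ 2 * T ω ^ 0 + (2 * (V ω ^ 1 * T ω ^ 1) + V ω ^ 0 * T ω ^ 2) := by
        funext ω; rw [hsum ω]; ring
      have i1 : Integrable (fun ω => V ω ^ 2 * T ω ^ 0) P := hImul 2 0 (by omega)
      have i2 : Integrable (fun ω => 2 * (V ω ^ 1 * T ω ^ 1)) P :=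
        (hImul 1 1 (by omega)).const_mul 2
      have i3 : Integrable (fun ω => V ω ^ 0 * T ω ^ 2) P := hImul 0 2 (by omega)
      rw [hfun]
      calc ∫ ω, (V ω ^ 2 * T ω ^ 0 + (2 * (V ω ^ 1 * T ω ^ 1) + V ω ^ 0 * T ω ^ 2)) ∂P
          = (∫ ω, V ω ^ 2 * T ω ^ 0 ∂P) + ((∫ ω, 2 * (V ω ^ 1 * T ω ^ 1) ∂P) +
            ∫ ω, V ω ^ 0 * T ω ^ 2 ∂P) := S3 _ _ _ i1 i2 i3
        _ = (n + 1 : ℕ) * σ2 := by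
            rw [integral_const_mul _ _, hEmul 2 0 (by omega), hEmul 1 1 (by omega),
              hEmul 0 2 (by omega), EV0, EV1, EV2, ET0, ET1, IH2]
            push_cast; ring
    · -- fourth moment
      have hfun : (fun ω => (∑ i ∈ Finset.Icc 1 (n+1), Y i ω) ^ 4) =
          fun ω => V ω ^ 4 * T ω ^ 0 + (4 * (V ω ^ 3 * T ω ^ 1) + (6 * (V ω ^ 2 * T ω ^ 2) +
            (4 * (V ω ^ 1 * T ω ^ 3) + V ω ^ 0 * T ω ^ 4))) := by
        funext ω; rw [hsum ω]; ring
      have i1 : Integrable (fun ω => V ω ^ 4 * T ω ^ 0) P := hImul 4 0 (by omega)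
      have i2 : Integrable (fun ω => 4 * (V ω ^ 3 * T ω ^ 1)) P :=
        (hImul 3 1 (by omega)).const_mul 4
      have i3 : Integrable (fun ω => 6 * (V ω ^ 2 * T ω ^ 2)) P :=
        (hImul 2 2 (by omega)).const_mul 6
      have i4 : Integrable (fun ω => 4 * (V ω ^ 1 * T ω ^ 3)) P :=
        (hImul 1 3 (by omega)).const_mul 4
      have i5 : Integrable (fun ω => V ω ^ 0 * T ω ^ 4) P := hImul 0 4 (by omega)
      rw [hfun]
      calc ∫ ω, (V ω ^ 4 * T ω ^ 0 + (4 * (V ω ^ 3 * T ω ^ 1) + (6 * (V ω ^ 2 * T ω ^ 2) +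
            (4 * (V ω ^ 1 * T ω ^ 3) + V ω ^ 0 * T ω ^ 4)))) ∂P
          = (∫ ω, V ω ^ 4 * T ω ^ 0 ∂P) + ((∫ ω, 4 * (V ω ^ 3 * T ω ^ 1) ∂P) +
            ((∫ ω, 6 * (V ω ^ 2 * T ω ^ 2) ∂P) + ((∫ ω, 4 * (V ω ^ 1 * T ω ^ 3) ∂P) +
              ∫ ω, V ω ^ 0 * T ω ^ 4 ∂P))) := S5 _ _ _ _ _ i1 i2 i3 i4 i5
        _ = (n + 1 : ℕ) * m4 + 3 * (n + 1 : ℕ) * (((n + 1 : ℕ) : ℝ) - 1) * σ2 ^ 2 := by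
            rw [integral_const_mul _ _, integral_const_mul _ _, integral_const_mul _ _,
              hEmul 4 0 (by omega), hEmul 3 1 (by omega), hEmul 2 2 (by omega),
              hEmul 1 3 (by omega), hEmul 0 4 (by omega),
              EV0, EV1, EV2, EV4, ET0, ET1, IH2, IH4]
            push_cast; ring

set_option maxHeartbeats 4000000

/-- **tail of the randomly stopped sum.** If `(ρ_i)` are i.i.d. positive random
variables with finite moments of every order and mean `E[ρ₁] > 0`, and `L` is independent of
`(ρ_i)` with `P(L ≥ n) = g(n) = n⁻¹ (log(n+e-1))⁻¹ (log log(n+e^e-1))⁻¹`, then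
`P(∑_{i=1}^L ρ_i + 1 > t) ~ E[ρ₁] t⁻¹ (log t)⁻¹ (log log t)⁻¹` as `t → ∞`, i.e.
`t log(t) log log(t) P(∑_{i=1}^L ρ_i + 1 > t) → E[ρ₁]`. -/
theorem random_sum_tail_asymptotics
    {Ω : Type*} [MeasurableSpace Ω] (P : Measure Ω) [IsProbabilityMeasure P]
    (ρ : ℕ → Ω → ℝ) (hρmeas : ∀ i, Measurable (ρ i)) (hρpos : ∀ i ω, 0 < ρ i ω)
    (hρiid : iIndepFun ρ P)
    (hρlaw : ∀ i, P.map (ρ i) = P.map (ρ 1))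
    (hρmom : ∀ p : ℕ, Integrable (fun ω => ρ 1 ω ^ p) P)
    (hρmean : 0 < ∫ ω, ρ 1 ω ∂P)
    (g : ℕ → ℝ)
    (hg : ∀ n : ℕ, 1 ≤ n → g n =
      ((n : ℝ))⁻¹ * (Real.log ((n : ℝ) + Real.exp 1 - 1))⁻¹ *
        (Real.log (Real.log ((n : ℝ) + Real.exp (Real.exp 1) - 1)))⁻¹)
    (L : Ω → ℕ) (hLmeas : Measurable L) (hLpos : ∀ ω, 1 ≤ L ω)
    (hLtail : ∀ n : ℕ, 1 ≤ n → P {ω | n ≤ L ω} = ENNReal.ofReal (g n))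
    (hLindep : IndepFun L (fun ω => fun i : ℕ => ρ i ω) P) :
    Tendsto (fun t : ℝ =>
        t * Real.log t * Real.log (Real.log t) *
          (P {ω | t < (∑ i ∈ Finset.Icc 1 (L ω), ρ i ω) + 1}).toReal)
      atTop (nhds (∫ ω, ρ 1 ω ∂P)) := by
  set μ := ∫ ω, ρ 1 ω ∂P with hμdef
  have hμpos : 0 < μ := hρmean
  have hgG : ∀ n : ℕ, 1 ≤ n → g n = rstaG n := hg
  -- centered variables
  have hident : ∀ i, IdentDistrib (ρ i) (ρ 1) P P := fun i =>
    ⟨(hρmeas i).aemeasurable, (hρmeas 1).aemeasurable, hρlaw i⟩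
  set Y : ℕ → Ω → ℝ := fun i ω => ρ i ω - μ with hYdef
  have hYmeas : ∀ i, Measurable (Y i) := fun i => (hρmeas i).sub measurable_const
  have hYindep : iIndepFun Y P :=
    hρiid.comp (fun _ x => x - μ) (fun _ => measurable_id.sub measurable_const)
  have hYident : ∀ i, IdentDistrib (Y i) (Y 1) P P := fun i =>
    (hident i).comp (measurable_id.sub measurable_const)
  have hY1int : ∀ k, Integrable (fun ω => Y 1 ω ^ k) P := by
    intro k
    have hfun : (fun ω => Y 1 ω ^ k) = fun ω =>
        ∑ j ∈ Finset.range (k+1), ρ 1 ω ^ j * ((-μ) ^ (k - j) * (k.choose j : ℝ)) := by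
      funext ω
      show (ρ 1 ω - μ) ^ k = _
      rw [sub_eq_add_neg, add_pow]
      exact Finset.sum_congr rfl fun j _ => by ring
    rw [hfun]
    exact integrable_finset_sum _ fun j _ => (hρmom j).mul_const _
  have hYint : ∀ i k, Integrable (fun ω => Y i ω ^ k) P := fun i k =>
    (((hYident i).comp (measurable_id.pow_const k)).integrable_iff).2 (hY1int k)
  have hρ1int : Integrable (ρ 1) P := by simpa using hρmom 1
  have hYzero1 : ∫ ω, Y 1 ω ∂P = 0 := by
    show ∫ ω, (ρ 1 ω - μ) ∂P = 0
    rw [integral_sub hρ1int (integrable_const μ), integral_const]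
    simp [hμdef]
  have hYzero : ∀ i, ∫ ω, Y i ω ∂P = 0 := fun i => by
    rw [(hYident i).integral_eq]; exact hYzero1
  set σ2 := ∫ ω, Y 1 ω ^ 2 ∂P with hσ2def
  set m4 := ∫ ω, Y 1 ω ^ 4 ∂P with hm4def
  have hσ2nonneg : 0 ≤ σ2 := integral_nonneg fun ω => sq_nonneg _
  have hm4nonneg : 0 ≤ m4 := integral_nonneg fun ω => by positivity
  have h2 : ∀ i, ∫ ω, Y i ω ^ 2 ∂P = σ2 := fun i =>
    ((hYident i).comp (measurable_id.pow_const 2)).integral_eq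
  have h4 : ∀ i, ∫ ω, Y i ω ^ 4 ∂P = m4 := fun i =>
    ((hYident i).comp (measurable_id.pow_const 4)).integral_eq
  have hmom := rsta_moment P Y hYmeas hYindep hYint hYzero σ2 m4 h2 h4
  -- Markov-type bound in terms of the uncentered sums
  have markovS : ∀ (n : ℕ) (a : ℝ), 0 < a →
      (P {ω | a ≤ |(∑ i ∈ Finset.Icc 1 n, ρ i ω) - n * μ|}).toReal ≤
        ((n:ℝ) * m4 + 3 * (n:ℝ)^2 * σ2^2) / a^4 := by
    intro n a ha
    obtain ⟨hintk, _, _, hE4⟩ := hmom n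
    have hTS : ∀ ω, ∑ i ∈ Finset.Icc 1 n, Y i ω = (∑ i ∈ Finset.Icc 1 n, ρ i ω) - n * μ := by
      intro ω
      show ∑ i ∈ Finset.Icc 1 n, (ρ i ω - μ) = _
      rw [Finset.sum_sub_distrib, Finset.sum_const, Nat.card_Icc]
      simp [nsmul_eq_mul]
    have hint4 : Integrable (fun ω => (∑ i ∈ Finset.Icc 1 n, Y i ω) ^ 4) P := hintk 4 le_rfl
    have hnn : 0 ≤ᵐ[P] fun ω => (∑ i ∈ Finset.Icc 1 n, Y i ω) ^ 4 :=
      Filter.Eventually.of_forall fun ω => by positivity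
    have hmar := mul_meas_ge_le_integral_of_nonneg hnn hint4 (a ^ 4)
    rw [hE4] at hmar
    have hset : {ω | a ≤ |(∑ i ∈ Finset.Icc 1 n, ρ i ω) - n * μ|} =
        {ω | a ^ 4 ≤ (∑ i ∈ Finset.Icc 1 n, Y i ω) ^ 4} := by
      ext ω
      simp only [Set.mem_setOf_eq, hTS ω]
      set s := (∑ i ∈ Finset.Icc 1 n, ρ i ω) - n * μ
      constructor
      · intro h
        calc a ^ 4 ≤ |s| ^ 4 := pow_le_pow_left₀ ha.le h 4
          _ = s ^ 4 := by rw [← abs_pow, abs_of_nonneg (by positivity)]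
      · intro h
        by_contra hlt
        push_neg at hlt
        have h2' : |s| ^ 4 < a ^ 4 := by
          apply pow_lt_pow_left₀ hlt (abs_nonneg _) (by norm_num)
        rw [← abs_pow, abs_of_nonneg (by positivity : (0:ℝ) ≤ s ^ 4)] at h2'
        linarith
    rw [hset, le_div_iff₀ (by positivity : (0:ℝ) < a ^ 4)]
    have hmono : (n:ℝ) * m4 + 3 * (n:ℝ) * ((n:ℝ) - 1) * σ2 ^ 2 ≤
        (n:ℝ) * m4 + 3 * (n:ℝ)^2 * σ2^2 := by nlinarith [(Nat.cast_nonneg n : (0:ℝ) ≤ (n:ℝ)), sq_nonneg σ2]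
    calc (P {ω | a ^ 4 ≤ (∑ i ∈ Finset.Icc 1 n, Y i ω) ^ 4}).toReal * a ^ 4
        = a ^ 4 * (P {ω | a ^ 4 ≤ (∑ i ∈ Finset.Icc 1 n, Y i ω) ^ 4}).toReal := mul_comm _ _
      _ ≤ (n:ℝ) * m4 + 3 * (n:ℝ) * ((n:ℝ) - 1) * σ2 ^ 2 := hmar
      _ ≤ _ := hmono
  -- measurability and monotonicity of partial sums
  have hSmeas : ∀ n : ℕ, Measurable (fun ω => ∑ i ∈ Finset.Icc 1 n, ρ i ω) := fun n =>
    Finset.measurable_sum _ fun i _ => hρmeas i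
  have hSmono : ∀ (ω : Ω) {a b : ℕ}, a ≤ b →
      (∑ i ∈ Finset.Icc 1 a, ρ i ω) ≤ ∑ i ∈ Finset.Icc 1 b, ρ i ω := fun ω a b hab =>
    Finset.sum_le_sum_of_subset_of_nonneg (Finset.Icc_subset_Icc_right hab)
      (fun i _ _ => (hρpos i ω).le)
  -- independence of L-events and sum-events
  have hindepSL : ∀ (n : ℕ) (t : ℝ),
      P ({ω | n ≤ L ω} ∩ {ω | t < ∑ i ∈ Finset.Icc 1 n, ρ i ω}) =
        P {ω | n ≤ L ω} * P {ω | t < ∑ i ∈ Finset.Icc 1 n, ρ i ω} := by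
    intro n t
    have hφ : Measurable (fun x : ℕ → ℝ => ∑ i ∈ Finset.Icc 1 n, x i) :=
      Finset.measurable_sum _ fun i _ => measurable_pi_apply i
    have hI : IndepFun L (fun ω => ∑ i ∈ Finset.Icc 1 n, ρ i ω) P :=
      hLindep.comp measurable_id hφ
    exact hI.measure_inter_preimage_eq_mul (Set.Ici n) (Set.Ioi t)
      measurableSet_Ici measurableSet_Ioi
  -- eventual positivity of the weight
  have hwt : ∀ᶠ t : ℝ in atTop, 0 < t ∧ 0 < Real.log t ∧ 0 < Real.log (Real.log t) := by
    filter_upwards [eventually_gt_atTop (Real.exp (Real.exp 1))] with t ht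
    have htpos : 0 < t := lt_trans (Real.exp_pos _) ht
    have hlt : Real.exp 1 < Real.log t := (Real.lt_log_iff_exp_lt htpos).2 ht
    refine ⟨htpos, lt_trans (Real.exp_pos 1) hlt, Real.log_pos ?_⟩
    linarith [Real.add_one_le_exp (1:ℝ)]
  have upper : ∀ ε : ℝ, 0 < ε → ε < 1 → ∃ u : ℝ → ℝ,
      Tendsto u atTop (nhds (μ / (1 - ε))) ∧
      ∀ᶠ t in atTop, t * Real.log t * Real.log (Real.log t) *
        (P {ω | t < (∑ i ∈ Finset.Icc 1 (L ω), ρ i ω) + 1}).toReal ≤ u t := by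
    intro ε hε hε1
    set c := (1 - ε) / μ with hcdef
    have hcpos : 0 < c := div_pos (by linarith) hμpos
    set m : ℝ → ℕ := fun t => ⌊c * t⌋₊ with hmdef
    refine ⟨fun t => t * Real.log t * Real.log (Real.log t) * rstaG (m t + 1)
      + ((c * m4 / ((ε/2)^4)) * (Real.log t * Real.log (Real.log t) / t^2)
         + (3 * c^2 * σ2^2 / ((ε/2)^4)) * (Real.log t * Real.log (Real.log t) / t)), ?_, ?_⟩
    · have hml : Tendsto (fun t => ((m t + 1 : ℕ) : ℝ)/t) atTop (nhds c) := by
        apply rsta_nat_approx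
        filter_upwards [eventually_ge_atTop 0] with t ht
        have h0 : (0:ℝ) ≤ c * t := by positivity
        constructor
        · push_cast
          linarith [Nat.lt_floor_add_one (c*t)]
        · push_cast
          linarith [Nat.floor_le h0]
      have h1 := rsta_lemA c hcpos _ hml
      have h2 : Tendsto (fun t => (c * m4 / ((ε/2)^4)) * (Real.log t * Real.log (Real.log t) / t^2)
          + (3 * c^2 * σ2^2 / ((ε/2)^4)) * (Real.log t * Real.log (Real.log t) / t)) atTop (nhds 0) := by
        have := (rsta_llt_div_sq.const_mul (c * m4 / ((ε/2)^4))).add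
          (rsta_llt_div.const_mul (3 * c^2 * σ2^2 / ((ε/2)^4)))
        simpa using this
      have h3 := h1.add h2
      rw [add_zero] at h3
      have hcinv : c⁻¹ = μ / (1 - ε) := by rw [hcdef, inv_div]
      rwa [hcinv] at h3
    · filter_upwards [hwt, eventually_ge_atTop (2/ε), eventually_gt_atTop 0]
        with t hw hte ht0
      obtain ⟨htpos, hltpos, hlltpos⟩ := hw
      have hεt : 2 ≤ ε * t := by
        have := (div_le_iff₀ hε).1 hte
        linarith
      have hmle : (m t : ℝ) ≤ c * t := Nat.floor_le (by positivity)
      have hmμ : (m t : ℝ) * μ ≤ (1 - ε) * t := by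
        have hmm := mul_le_mul_of_nonneg_right hmle hμpos.le
        have hcμ : c * t * μ = (1 - ε) * t := by
          rw [hcdef]; field_simp
        linarith
      have hsub : {ω | t < (∑ i ∈ Finset.Icc 1 (L ω), ρ i ω) + 1} ⊆
          {ω | m t + 1 ≤ L ω} ∪
            {ω | (ε/2) * t ≤ |(∑ i ∈ Finset.Icc 1 (m t), ρ i ω) - (m t : ℝ) * μ|} := by
        intro ω hω
        simp only [Set.mem_setOf_eq, Set.mem_union] at hω ⊢
        by_cases hL : L ω ≤ m t
        · right
          have hmono := hSmono ω hL
          have h1 : t - 1 < ∑ i ∈ Finset.Icc 1 (m t), ρ i ω := by linarith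
          have h2 : (ε/2) * t ≤ (∑ i ∈ Finset.Icc 1 (m t), ρ i ω) - (m t : ℝ) * μ := by
            linarith
          exact le_trans h2 (le_abs_self _)
        · left; omega
      have hgnn : 0 ≤ g (m t + 1) := by
        rw [hgG _ (by omega)]
        exact (rstaG_pos (by omega)).le
      have hPle : (P {ω | t < (∑ i ∈ Finset.Icc 1 (L ω), ρ i ω) + 1}).toReal ≤
          g (m t + 1) +
            ((m t : ℝ) * m4 + 3 * (m t:ℝ)^2 * σ2^2) / ((ε/2)*t)^4 := by
        have h1 : P {ω | t < (∑ i ∈ Finset.Icc 1 (L ω), ρ i ω) + 1} ≤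
            P {ω | m t + 1 ≤ L ω} +
              P {ω | (ε/2) * t ≤ |(∑ i ∈ Finset.Icc 1 (m t), ρ i ω) - (m t : ℝ) * μ|} :=
          le_trans (measure_mono hsub) (measure_union_le _ _)
        have h2 : (P {ω | t < (∑ i ∈ Finset.Icc 1 (L ω), ρ i ω) + 1}).toReal ≤
            (P {ω | m t + 1 ≤ L ω}).toReal +
              (P {ω | (ε/2) * t ≤
                |(∑ i ∈ Finset.Icc 1 (m t), ρ i ω) - (m t : ℝ) * μ|}).toReal := by
          refine le_trans (ENNReal.toReal_mono ?_ h1) ?_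
          · exact ENNReal.add_ne_top.2 ⟨measure_ne_top _ _, measure_ne_top _ _⟩
          · rw [ENNReal.toReal_add (measure_ne_top _ _) (measure_ne_top _ _)]
        refine le_trans h2 (add_le_add ?_ ?_)
        · rw [hLtail _ (by omega), ENNReal.toReal_ofReal hgnn]
        · exact markovS (m t) ((ε/2)*t) (by positivity)
      have hh : (0:ℝ) ≤ t * Real.log t * Real.log (Real.log t) := by positivity
      refine le_trans (mul_le_mul_of_nonneg_left hPle hh) ?_
      rw [mul_add]
      apply add_le_add
      · rw [hgG _ (by omega)]
      · have hnum : (m t : ℝ) * m4 + 3 * (m t:ℝ)^2 * σ2^2 ≤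
            (c*t) * m4 + 3 * (c*t)^2 * σ2^2 := by
          have hq1 : (m t:ℝ) * m4 ≤ c*t*m4 := mul_le_mul_of_nonneg_right hmle hm4nonneg
          have hq2 : (m t:ℝ)^2 ≤ (c*t)^2 :=
            pow_le_pow_left₀ (Nat.cast_nonneg _) hmle 2
          have hq3 := mul_le_mul_of_nonneg_right hq2 (sq_nonneg σ2)
          linarith
        have hD : (0:ℝ) < ((ε/2)*t)^4 := by positivity
        have step1 : t * Real.log t * Real.log (Real.log t) *
            (((m t : ℝ) * m4 + 3 * (m t:ℝ)^2 * σ2^2) / ((ε/2)*t)^4) ≤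
            t * Real.log t * Real.log (Real.log t) *
            (((c*t) * m4 + 3 * (c*t)^2 * σ2^2) / ((ε/2)*t)^4) := by
          apply mul_le_mul_of_nonneg_left _ hh
          exact (div_le_div_iff_of_pos_right hD).2 hnum
        refine le_trans step1 (le_of_eq ?_)
        exact rsta_alg c (ε/2) t _ _ m4 (σ2^2) (ne_of_gt htpos) (by positivity)
  have lower : ∀ ε : ℝ, 0 < ε → ∃ l : ℝ → ℝ,
      Tendsto l atTop (nhds (μ / (1 + ε))) ∧
      ∀ᶠ t in atTop, l t ≤ t * Real.log t * Real.log (Real.log t) *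
        (P {ω | t < (∑ i ∈ Finset.Icc 1 (L ω), ρ i ω) + 1}).toReal := by
    intro ε hε
    set c := (1 + ε) / μ with hcdef
    have hcpos : 0 < c := div_pos (by linarith) hμpos
    set nn : ℝ → ℕ := fun t => ⌈c * t⌉₊ with hnndef
    set D := (c+1) * m4 + 3 * (c+1)^2 * σ2^2 with hDdef
    have hDnonneg : 0 ≤ D := by
      have : (0:ℝ) ≤ (c+1) * m4 := by positivity
      have : (0:ℝ) ≤ 3 * (c+1)^2 * σ2^2 := by positivity
      rw [hDdef]; positivity
    refine ⟨fun t => (t * Real.log t * Real.log (Real.log t) * rstaG (nn t)) *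
      (1 - (D / ε^4) / t^2), ?_, ?_⟩
    · have hnl : Tendsto (fun t => ((nn t : ℕ) : ℝ)/t) atTop (nhds c) := by
        apply rsta_nat_approx
        filter_upwards [eventually_ge_atTop 0] with t ht
        have h0 : (0:ℝ) ≤ c * t := by positivity
        exact ⟨Nat.le_ceil _, (Nat.ceil_lt_add_one h0).le⟩
      have h1 := rsta_lemA c hcpos _ hnl
      have h2 : Tendsto (fun t : ℝ => 1 - (D / ε^4) / t^2) atTop (nhds 1) := by
        have h3 : Tendsto (fun t : ℝ => (D / ε^4) / t^2) atTop (nhds 0) :=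
          tendsto_const_nhds.div_atTop (tendsto_pow_atTop two_ne_zero)
        have := (tendsto_const_nhds (x := (1:ℝ))).sub h3
        simpa using this
      have h3 := h1.mul h2
      rw [mul_one] at h3
      have hcinv : c⁻¹ = μ / (1 + ε) := by rw [hcdef, inv_div]
      rwa [hcinv] at h3
    · filter_upwards [hwt, eventually_ge_atTop (1/c), eventually_ge_atTop 1]
        with t hw htc ht1
      obtain ⟨htpos, hltpos, hlltpos⟩ := hw
      have hct : 1 ≤ c * t := by
        have := (div_le_iff₀ hcpos).1 htc
        linarith
      have hn1 : 1 ≤ nn t := by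
        rw [hnndef]
        exact Nat.one_le_ceil_iff.2 (by linarith)
      have hnge : c * t ≤ (nn t : ℝ) := Nat.le_ceil _
      have hnle : (nn t:ℝ) ≤ c * t + 1 := (Nat.ceil_lt_add_one (by positivity)).le
      have hnμ : (1 + ε) * t ≤ (nn t : ℝ) * μ := by
        have hmm := mul_le_mul_of_nonneg_right hnge hμpos.le
        have hcμ : c * t * μ = (1 + ε) * t := by rw [hcdef]; field_simp
        linarith
      have hsub : {ω | nn t ≤ L ω} ∩ {ω | t < ∑ i ∈ Finset.Icc 1 (nn t), ρ i ω} ⊆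
          {ω | t < (∑ i ∈ Finset.Icc 1 (L ω), ρ i ω) + 1} := by
        rintro ω ⟨h1, h2⟩
        simp only [Set.mem_setOf_eq] at h1 h2 ⊢
        have := hSmono ω h1
        linarith
      have hBme : MeasurableSet {ω | t < ∑ i ∈ Finset.Icc 1 (nn t), ρ i ω} :=
        measurableSet_lt measurable_const (hSmeas _)
      have hcomp : (P ({ω | t < ∑ i ∈ Finset.Icc 1 (nn t), ρ i ω}ᶜ)).toReal ≤
          (D / ε^4) / t^2 := by
        have hsub2 : {ω | t < ∑ i ∈ Finset.Icc 1 (nn t), ρ i ω}ᶜ ⊆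
            {ω | ε * t ≤ |(∑ i ∈ Finset.Icc 1 (nn t), ρ i ω) - (nn t : ℝ) * μ|} := by
          intro ω hω
          simp only [Set.mem_compl_iff, Set.mem_setOf_eq, not_lt] at hω ⊢
          refine le_abs.2 (Or.inr ?_)
          linarith
        have hm := markovS (nn t) (ε*t) (by positivity)
        have h5 : (P ({ω | t < ∑ i ∈ Finset.Icc 1 (nn t), ρ i ω}ᶜ)).toReal ≤
            ((nn t:ℝ) * m4 + 3 * (nn t:ℝ)^2 * σ2^2) / (ε*t)^4 :=
          le_trans (ENNReal.toReal_mono (measure_ne_top _ _) (measure_mono hsub2)) hm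
        refine le_trans h5 ?_
        have hN : (nn t:ℝ) * m4 + 3 * (nn t:ℝ)^2 * σ2^2 ≤ D * t^2 := by
          have ht2 : t ≤ t^2 := by
            have := mul_le_mul_of_nonneg_left ht1 htpos.le
            calc t = t * 1 := (mul_one t).symm
              _ ≤ t * t := this
              _ = t^2 := (sq t).symm
          have ha1 : (nn t:ℝ) ≤ (c+1)*t :=
            hnle.trans (by linarith)
          have ha2 : (nn t:ℝ) * m4 ≤ ((c+1)*t^2) * m4 := by
            refine mul_le_mul_of_nonneg_right (ha1.trans ?_) hm4nonneg
            exact mul_le_mul_of_nonneg_left ht2 (by positivity)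
          have ha3 : (nn t:ℝ)^2 * σ2^2 ≤ ((c+1)^2*t^2) * σ2^2 := by
            refine mul_le_mul_of_nonneg_right ?_ (sq_nonneg σ2)
            calc (nn t:ℝ)^2 ≤ ((c+1)*t)^2 := pow_le_pow_left₀ (Nat.cast_nonneg _) ha1 2
              _ = (c+1)^2*t^2 := by ring
          have hDD : D * t^2 = ((c+1)*t^2) * m4 + 3 * (((c+1)^2*t^2) * σ2^2) := by
            rw [hDdef]; ring
          rw [hDD]
          linarith
        have hq : (D / ε^4) / t^2 = D / (ε^4 * t^2) := by
          rw [div_div]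
        rw [hq, div_le_div_iff₀ (by positivity) (by positivity)]
        calc ((nn t:ℝ) * m4 + 3 * (nn t:ℝ)^2 * σ2^2) * (ε^4 * t^2)
            ≤ (D * t^2) * (ε^4 * t^2) := mul_le_mul_of_nonneg_right hN (by positivity)
          _ = D * (ε*t)^4 := by ring
      have hPA : (P {ω | nn t ≤ L ω}).toReal = rstaG (nn t) := by
        rw [hLtail _ hn1, ENNReal.toReal_ofReal (by rw [hgG _ hn1]; exact (rstaG_pos hn1).le),
          hgG _ hn1]
      have hPB : 1 - (D / ε^4) / t^2 ≤
          (P {ω | t < ∑ i ∈ Finset.Icc 1 (nn t), ρ i ω}).toReal := by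
        have hc1 := measure_add_measure_compl (μ := P) hBme
        rw [measure_univ] at hc1
        have hc2 := congrArg ENNReal.toReal hc1
        rw [ENNReal.toReal_add (measure_ne_top _ _) (measure_ne_top _ _),
          ENNReal.toReal_one] at hc2
        linarith
      have hh : (0:ℝ) ≤ t * Real.log t * Real.log (Real.log t) := by positivity
      have hG0 : (0:ℝ) ≤ rstaG (nn t) := (rstaG_pos hn1).le
      calc (t * Real.log t * Real.log (Real.log t) * rstaG (nn t)) * (1 - (D / ε^4) / t^2)
          ≤ (t * Real.log t * Real.log (Real.log t) * rstaG (nn t)) *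
            (P {ω | t < ∑ i ∈ Finset.Icc 1 (nn t), ρ i ω}).toReal :=
            mul_le_mul_of_nonneg_left hPB (by positivity)
        _ = t * Real.log t * Real.log (Real.log t) *
            ((P {ω | nn t ≤ L ω}).toReal *
              (P {ω | t < ∑ i ∈ Finset.Icc 1 (nn t), ρ i ω}).toReal) := by
            rw [hPA]; ring
        _ = t * Real.log t * Real.log (Real.log t) *
            (P ({ω | nn t ≤ L ω} ∩ {ω | t < ∑ i ∈ Finset.Icc 1 (nn t), ρ i ω})).toReal := by
            rw [hindepSL (nn t) t, ENNReal.toReal_mul]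
        _ ≤ t * Real.log t * Real.log (Real.log t) *
            (P {ω | t < (∑ i ∈ Finset.Icc 1 (L ω), ρ i ω) + 1}).toReal :=
            mul_le_mul_of_nonneg_left
              (ENNReal.toReal_mono (measure_ne_top _ _) (measure_mono hsub)) hh
  refine tendsto_order.2 ⟨?_, ?_⟩
  · intro a ha
    set ε := min (1/2 : ℝ) ((μ - a) / (2 * μ)) with hεdef
    have hεpos : 0 < ε := lt_min (by norm_num) (div_pos (by linarith) (by linarith))
    have haμ : a < μ / (1 + ε) := by
      rw [lt_div_iff₀ (by linarith)]
      have hε2 : ε ≤ (μ - a) / (2 * μ) := min_le_right _ _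
      rcases le_or_gt a 0 with h0 | h0
      · nlinarith
      · have : a * ε ≤ a * ((μ - a) / (2 * μ)) :=
          mul_le_mul_of_nonneg_left hε2 h0.le
        have h3 : a * ((μ - a) / (2 * μ)) < μ * ((μ - a) / (2 * μ)) := by
          apply mul_lt_mul_of_pos_right ha (div_pos (by linarith) (by linarith))
        have h4 : μ * ((μ - a) / (2 * μ)) = (μ - a) / 2 := by field_simp
        nlinarith
    obtain ⟨l, hl, hlf⟩ := lower ε hεpos
    have := hl.eventually (eventually_gt_nhds haμ)
    filter_upwards [this, hlf] with t h1 h2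
    exact lt_of_lt_of_le h1 h2
  · intro b hb
    have hbpos : 0 < b := lt_trans hμpos hb
    set ε := min (1/2 : ℝ) ((b - μ) / (2 * b)) with hεdef
    have hεpos : 0 < ε := lt_min (by norm_num) (div_pos (by linarith) (by linarith))
    have hε1 : ε < 1 := lt_of_le_of_lt (min_le_left _ _) (by norm_num)
    have hbμ : μ / (1 - ε) < b := by
      rw [div_lt_iff₀ (by linarith)]
      have hε2 : ε ≤ (b - μ) / (2 * b) := min_le_right _ _
      have : b * ε ≤ b * ((b - μ) / (2 * b)) := mul_le_mul_of_nonneg_left hε2 hbpos.le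
      have h4 : b * ((b - μ) / (2 * b)) = (b - μ) / 2 := by field_simp
      nlinarith
    obtain ⟨u, hu, huf⟩ := upper ε hεpos hε1
    have := hu.eventually (eventually_lt_nhds hbμ)
    filter_upwards [this, huf] with t h1 h2
    exact lt_of_le_of_lt h2 h1
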